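/- arXiv:1302.4266 — 2 statements merged into one kernel-verified Lean document; each statement's English description precedes it below -/
import Mathlib

section
/- In a threshold graph built by a sequence of union and join vertices (with at least two initial union vertices and at least one join vertex), a vertex's neighborhood is a clique if and only if it is a union vertex. -/
open SimpleGraph

/-- Add one vertex (with index `n`) to a graph on `Fin n`: if `b = true` the new vertex
is a join (dominating) vertex, adjacent to all previous vertices; if `b = false` it is a
union (isolated) vertex, adjacent to none. -/
def addVertex (b : Bool) {n : ℕ} (G : SimpleGraph (Fin n)) : SimpleGraph (Fin (n + 1)) where
  Adj x y :=
    (∃ (hx : x.val < n) (hy : y.val < n), G.Adj ⟨x.val, hx⟩ ⟨y.val, hy⟩) ∨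
      (b = true ∧ x ≠ y ∧ (x.val = n ∨ y.val = n))
  symm := by
    constructor
    rintro x y (⟨hx, hy, h⟩ | ⟨hb, hxy, hn⟩)
    · exact Or.inl ⟨hy, hx, h.symm⟩
    · exact Or.inr ⟨hb, hxy.symm, hn.symm⟩
  loopless := by
    constructor
    rintro x (⟨hx, hy, h⟩ | ⟨_, hxy, _⟩)
    · exact G.loopless.irrefl _ h
    · exact hxy rfl

/-- The threshold graph built from a word over `{u, j}` (here `false = u`, `true = j`).
The *head* of the list is the last vertex added, so vertex `i : Fin w.length` was added
with character `w.getD (w.length - 1 - i) _`; vertex `0` is the first vertex added. -/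
def buildGraph : (w : List Bool) → SimpleGraph (Fin w.length)
  | [] => ⊥
  | b :: w => addVertex b (buildGraph w)

lemma buildGraph_adj : ∀ (w : List Bool) (x y : Fin w.length),
    (buildGraph w).Adj x y ↔ x ≠ y ∧ w.getD (w.length - 1 - max x.val y.val) true = true := by
  intro w
  induction w with
  | nil => exact fun x => x.elim0
  | cons b w ih =>
    intro x y
    show (addVertex b (buildGraph w)).Adj x y ↔ _
    have hxL : x.val < w.length + 1 := x.isLt
    have hyL : y.val < w.length + 1 := y.isLt
    rcases Nat.lt_or_ge (max x.val y.val) w.length with hm | hm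
    · have hx : x.val < w.length := lt_of_le_of_lt (le_max_left _ _) hm
      have hy : y.val < w.length := lt_of_le_of_lt (le_max_right _ _) hm
      have hidx : (b :: w).length - 1 - max x.val y.val = (w.length - 1 - max x.val y.val) + 1 := by
        simp only [List.length_cons]; omega
      rw [hidx, List.getD_cons_succ]
      constructor
      · rintro (⟨hx', hy', h⟩ | ⟨_, _, hor⟩)
        · have := (ih ⟨x.val, hx'⟩ ⟨y.val, hy'⟩).mp h
          refine ⟨fun he => this.1 (by simp [he]), ?_⟩
          simpa using this.2
        · omega
      · rintro ⟨hne, hc⟩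
        refine Or.inl ⟨hx, hy, (ih ⟨x.val, hx⟩ ⟨y.val, hy⟩).mpr ⟨?_, by simpa using hc⟩⟩
        intro he
        exact hne (Fin.ext (by simpa using congrArg Fin.val he))
    · have hm' : max x.val y.val = w.length := by omega
      have hidx : (b :: w).length - 1 - max x.val y.val = 0 := by
        simp only [List.length_cons]; omega
      rw [hidx, List.getD_cons_zero]
      constructor
      · rintro (⟨hx', hy', _⟩ | ⟨hb, hne, _⟩)
        · omega
        · exact ⟨hne, hb⟩
      · rintro ⟨hne, hb⟩
        exact Or.inr ⟨hb, hne, by omega⟩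

/-- In a threshold graph whose building word begins with `uuj` (i.e. the first three
vertices added are union, union, join), a vertex's neighborhood is a clique iff the
vertex is a union vertex. -/
theorem neighborhood_clique_iff_union (w : List Bool)
    (hw : ∃ r : List Bool, w = r ++ [true, false, false]) (v : Fin w.length) :
    (buildGraph w).IsClique ((buildGraph w).neighborSet v) ↔
      w.getD (w.length - 1 - v.val) true = false := by
  obtain ⟨r, rfl⟩ := hw
  have hL : (r ++ [true, false, false]).length = r.length + 3 := by simp
  have hvL : v.val < r.length + 3 := by have := v.isLt; omega
  have hget0 : (r ++ [true, false, false]).getD ((r ++ [true, false, false]).length - 1 - 0) true = false := by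
    rw [hL]
    have h2 : r.length + 3 - 1 - 0 = r.length + 2 := by omega
    rw [h2, List.getD_append_right r _ true _ (by omega)]
    have : r.length + 2 - r.length = 2 := by omega
    rw [this]; rfl
  have hget1 : (r ++ [true, false, false]).getD ((r ++ [true, false, false]).length - 1 - 1) true = false := by
    rw [hL]
    have h2 : r.length + 3 - 1 - 1 = r.length + 1 := by omega
    rw [h2, List.getD_append_right r _ true _ (by omega)]
    have : r.length + 1 - r.length = 1 := by omega
    rw [this]; rfl
  constructor
  · intro hcl
    by_contra hv
    have hv' : (r ++ [true, false, false]).getD ((r ++ [true, false, false]).length - 1 - v.val) true = true := by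
      cases h : (r ++ [true, false, false]).getD ((r ++ [true, false, false]).length - 1 - v.val) true
      · exact absurd h hv
      · rfl
    have hv2 : 2 ≤ v.val := by
      by_contra h
      push_neg at h
      interval_cases hvv : v.val
      · rw [hget0] at hv'; simp at hv'
      · rw [hget1] at hv'; simp at hv'
    set z0 : Fin (r ++ [true, false, false]).length := ⟨0, by omega⟩ with hz0
    set z1 : Fin (r ++ [true, false, false]).length := ⟨1, by omega⟩ with hz1
    have h0 : z0 ∈ (buildGraph _).neighborSet v := by
      rw [mem_neighborSet, buildGraph_adj]
      have hz0v : z0.val = 0 := rfl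
      refine ⟨fun h => by have := congrArg Fin.val h; rw [hz0v] at this; omega, ?_⟩
      have : max v.val z0.val = v.val := by rw [hz0v]; omega
      rw [this]; exact hv'
    have h1 : z1 ∈ (buildGraph _).neighborSet v := by
      rw [mem_neighborSet, buildGraph_adj]
      have hz1v : z1.val = 1 := rfl
      refine ⟨fun h => by have := congrArg Fin.val h; rw [hz1v] at this; omega, ?_⟩
      have : max v.val z1.val = v.val := by rw [hz1v]; omega
      rw [this]; exact hv'
    have hne : z0 ≠ z1 := by
      intro h; have := congrArg Fin.val h; have h0 : z0.val = 0 := rfl; have h1 : z1.val = 1 := rfl; omega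
    have hadj := hcl h0 h1 hne
    rw [buildGraph_adj] at hadj
    have hmax : max z0.val z1.val = 1 := by have h0 : z0.val = 0 := rfl; have h1 : z1.val = 1 := rfl; omega
    rw [hmax, hget1] at hadj
    simp at hadj
  · intro hv x hx y hy hxy
    rw [mem_neighborSet, buildGraph_adj] at hx hy
    rw [buildGraph_adj]
    refine ⟨hxy, ?_⟩
    have hxv : v.val < x.val := by
      rcases Nat.lt_or_ge v.val x.val with h | h
      · exact h
      · exfalso
        have hne : v.val ≠ x.val := fun he => hx.1 (Fin.ext he)
        have hmax : max v.val x.val = v.val := by omega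
        rw [hmax, hv] at hx
        exact absurd hx.2 (by simp)
    have hyv : v.val < y.val := by
      rcases Nat.lt_or_ge v.val y.val with h | h
      · exact h
      · exfalso
        have hne : v.val ≠ y.val := fun he => hy.1 (Fin.ext he)
        have hmax : max v.val y.val = v.val := by omega
        rw [hmax, hv] at hy
        exact absurd hy.2 (by simp)
    have hx' : (r ++ [true, false, false]).getD ((r ++ [true, false, false]).length - 1 - x.val) true = true := by
      have hmax : max v.val x.val = x.val := by omega
      rw [hmax] at hx; exact hx.2
    have hy' : (r ++ [true, false, false]).getD ((r ++ [true, false, false]).length - 1 - y.val) true = true := by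
      have hmax : max v.val y.val = y.val := by omega
      rw [hmax] at hy; exact hy.2
    rcases Nat.le_total x.val y.val with h | h
    · have : max x.val y.val = y.val := by omega
      rw [this]; exact hy'
    · have : max x.val y.val = x.val := by omega
      rw [this]; exact hx'
end

section
/- For every h ≥ 1 and n ≥ 2, every natural number i with 0 ≤ i < exp^(h)(t) can be represented by a rooted colored tree of height at most h−1 using t colors, where: numbers less than 2^t are single vertices colored by the subset of colors given by their binary representation, and a number with binary representation b_k...b_0 at a higher range is represented by a root whose children are the trees representing those indices j with b_j = 1; moreover this representation is injective. -/
/-- Iterated exponential: `towerExp 0 n = n`, `towerExp (k+1) n = 2 ^ towerExp k n`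
(so `towerExp 1 t = 2 ^ t`). -/
def towerExp : ℕ → ℕ → ℕ
  | 0, n => n
  | k + 1, n => 2 ^ towerExp k n

/-- Rooted trees in which every vertex is labeled by a set of colors from `Fin t`. -/
inductive ColTree (t : ℕ) : Type
  | node : Finset (Fin t) → List (ColTree t) → ColTree t

/-- The height of a rooted colored tree (a single vertex has height `0`). -/
def ColTree.height {t : ℕ} : ColTree t → ℕ
  | .node _ [] => 0
  | .node c (x :: xs) => max (x.height + 1) (ColTree.node c xs).height

/-- The inductive tree representation of numbers using `t` colors: a number `j < 2 ^ t`
is a single vertex colored by the set of `1`-bit positions of `j`; a larger number is a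
root (with no colors) whose children represent the bit positions `p` with bit `p` of `j`
equal to `1`.  The first argument is recursion fuel (bounding the recursion depth). -/
def repTree (t : ℕ) : ℕ → ℕ → ColTree t
  | 0, j => .node (Finset.univ.filter fun c : Fin t => j.testBit c.val) []
  | fuel + 1, j =>
    if j < 2 ^ t then .node (Finset.univ.filter fun c : Fin t => j.testBit c.val) []
    else .node ∅ (((List.range j).filter fun p => j.testBit p).map (repTree t fuel))

/-- A set bit position is smaller than the number itself. -/
lemma lt_of_testBit_aux {j p : ℕ} (h : j.testBit p = true) : p < j :=
  lt_of_lt_of_le (Nat.lt_two_pow_self (n := p)) (Nat.ge_two_pow_of_testBit h)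

lemma mem_bitList {j p : ℕ} :
    p ∈ (List.range j).filter (fun p => j.testBit p) ↔ j.testBit p = true := by
  simp only [List.mem_filter, List.mem_range, and_iff_right_iff_imp]
  exact fun h => lt_of_testBit_aux h

/-- Node height bound from children's height bounds. -/
lemma height_node_le {t : ℕ} (c : Finset (Fin t)) (l : List (ColTree t)) (k : ℕ)
    (h : ∀ x ∈ l, x.height ≤ k) : (ColTree.node c l).height ≤ k + 1 := by
  induction l with
  | nil => simp [ColTree.height]
  | cons x xs ih =>
    simp only [ColTree.height, max_le_iff]
    exact ⟨by have := h x (by simp); omega, ih fun y hy => h y (List.mem_cons_of_mem _ hy)⟩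

/-- Map with a function injective on the elements is injective. -/
lemma map_injOn_eq {α β : Type*} (f : α → β) :
    ∀ l1 l2 : List α, (∀ x ∈ l1, ∀ y ∈ l2, f x = f y → x = y) →
      l1.map f = l2.map f → l1 = l2 := by
  intro l1
  induction l1 with
  | nil => intro l2 _ h; cases l2 <;> simp_all
  | cons a as ih =>
    intro l2 hinj h
    cases l2 with
    | nil => simp at h
    | cons b bs =>
      simp only [List.map_cons, List.cons.injEq] at h
      have hab : a = b := hinj a (by simp) b (by simp) h.1
      have : as = bs := ih bs
        (fun x hx y hy => hinj x (List.mem_cons_of_mem _ hx) y (List.mem_cons_of_mem _ hy))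
        h.2
      simp [hab, this]

/-- Two numbers below `2 ^ t` with the same color set are equal. -/
lemma leaf_inj {t i j : ℕ} (hi : i < 2 ^ t) (hj : j < 2 ^ t)
    (h : (Finset.univ.filter fun c : Fin t => i.testBit c.val) =
      (Finset.univ.filter fun c : Fin t => j.testBit c.val)) : i = j := by
  apply Nat.eq_of_testBit_eq
  intro p
  by_cases hp : p < t
  · have := Finset.ext_iff.mp h ⟨p, hp⟩
    simpa using this
  · have h2 : 2 ^ t ≤ 2 ^ p := Nat.pow_le_pow_right (by norm_num) (by omega)
    rw [Nat.testBit_lt_two_pow (lt_of_lt_of_le hi h2),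
      Nat.testBit_lt_two_pow (lt_of_lt_of_le hj h2)]

lemma repTree_height (t : ℕ) :
    ∀ fuel, ∀ i < towerExp (fuel + 1) t, (repTree t fuel i).height ≤ fuel := by
  intro fuel
  induction fuel with
  | zero => intro i _; simp [repTree, ColTree.height]
  | succ k ih =>
    intro i hi
    rw [repTree]
    by_cases h : i < 2 ^ t
    · simp [h, ColTree.height]
    · simp only [h, if_false]
      apply height_node_le
      intro x hx
      simp only [List.mem_map] at hx
      obtain ⟨p, hp, rfl⟩ := hx
      apply ih
      have hbit := (mem_bitList.mp hp)
      have : 2 ^ p ≤ i := Nat.ge_two_pow_of_testBit hbit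
      have hi' : i < 2 ^ towerExp (k + 1) t := hi
      have : (2 : ℕ) ^ p < 2 ^ towerExp (k + 1) t := lt_of_le_of_lt this hi'
      exact (Nat.pow_lt_pow_iff_right (by norm_num)).mp this

lemma repTree_inj (t : ℕ) (ht : 1 ≤ t) :
    ∀ fuel, ∀ i < towerExp (fuel + 1) t, ∀ j < towerExp (fuel + 1) t,
      repTree t fuel i = repTree t fuel j → i = j := by
  intro fuel
  induction fuel with
  | zero =>
    intro i hi j hj h
    simp only [repTree, ColTree.node.injEq] at h
    exact leaf_inj hi hj h.1
  | succ k ih =>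
    intro i hi j hj h
    rw [repTree, repTree] at h
    by_cases h1 : i < 2 ^ t <;> by_cases h2 : j < 2 ^ t
    · simp only [h1, h2, if_true, ColTree.node.injEq] at h
      exact leaf_inj h1 h2 h.1
    · exfalso
      simp only [h1, h2, if_true, if_false, ColTree.node.injEq] at h
      have hempty := h.2.symm
      have : j = 0 := by
        apply Nat.eq_of_testBit_eq
        intro p
        by_cases hp : j.testBit p = true
        · exfalso
          have : p ∈ (List.range j).filter (fun p => j.testBit p) := mem_bitList.mpr hp
          rw [List.map_eq_nil_iff] at hempty
          simp [hempty] at this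
        · simp at hp; simp [hp]
      have : (0 : ℕ) < 2 ^ t := Nat.two_pow_pos t
      omega
    · exfalso
      simp only [h1, h2, if_true, if_false, ColTree.node.injEq] at h
      have hempty := h.2
      have : i = 0 := by
        apply Nat.eq_of_testBit_eq
        intro p
        by_cases hp : i.testBit p = true
        · exfalso
          have : p ∈ (List.range i).filter (fun p => i.testBit p) := mem_bitList.mpr hp
          rw [List.map_eq_nil_iff] at hempty
          simp [hempty] at this
        · simp at hp; simp [hp]
      have : (0 : ℕ) < 2 ^ t := Nat.two_pow_pos t
      omega
    · simp only [h1, h2, if_false, ColTree.node.injEq] at h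
      have hlt : ∀ {n p : ℕ}, n < towerExp (k + 2) t → n.testBit p = true →
          p < towerExp (k + 1) t := by
        intro n p hn hp
        have : 2 ^ p ≤ n := Nat.ge_two_pow_of_testBit hp
        have : (2 : ℕ) ^ p < 2 ^ towerExp (k + 1) t := lt_of_le_of_lt this hn
        exact (Nat.pow_lt_pow_iff_right (by norm_num)).mp this
      have hlists : (List.range i).filter (fun p => i.testBit p) =
          (List.range j).filter (fun p => j.testBit p) := by
        apply map_injOn_eq (repTree t k) _ _ _ h.2
        intro x hx y hy hxy
        exact ih x (hlt hi (mem_bitList.mp hx)) y (hlt hj (mem_bitList.mp hy)) hxy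
      apply Nat.eq_of_testBit_eq
      intro p
      have key : (p ∈ (List.range i).filter (fun p => i.testBit p)) ↔
          (p ∈ (List.range j).filter (fun p => j.testBit p)) := by rw [hlists]
      rw [mem_bitList, mem_bitList] at key
      cases hip : i.testBit p <;> cases hjp : j.testBit p <;> simp_all

/-- For every `h ≥ 1`, every number `i < exp^(h)(t)` is represented by a rooted
`t`-colored tree of height at most `h - 1`, and the representation is injective on this
range. -/
theorem repTree_height_and_injective (t h : ℕ) (ht : 1 ≤ t) (hh : 1 ≤ h) :
    (∀ i < towerExp h t, (repTree t (h - 1) i).height ≤ h - 1) ∧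
      (∀ i < towerExp h t, ∀ j < towerExp h t,
        repTree t (h - 1) i = repTree t (h - 1) j → i = j) := by
  obtain ⟨k, rfl⟩ : ∃ k, h = k + 1 := ⟨h - 1, by omega⟩
  simp only [Nat.add_sub_cancel]
  exact ⟨repTree_height t k, repTree_inj t ht k⟩
end
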